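/- Let ℓ ≥ 5 be a prime number and let G ⊆ GL₂(ℤ_ℓ) be a closed subgroup. If SL₂(ℤ/ℓℤ) ⊆ G(ℓ), then SL₂(ℤ_ℓ) ⊆ G. -/

import Mathlib

open scoped MatrixGroups

/-- The map `GL₂(R) → GL₂(S)` induced by a ring homomorphism `R →+* S`. -/
abbrev glMap {R S : Type*} [CommRing R] [CommRing S] (f : R →+* S) :
    GL (Fin 2) R →* GL (Fin 2) S := Matrix.GeneralLinearGroup.map f

/-- `SL₂(R)` viewed as a subgroup of `GL₂(R)`. -/
def SL2subgroup (R : Type*) [CommRing R] : Subgroup (GL (Fin 2) R) :=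
  (Matrix.SpecialLinearGroup.toGL (n := Fin 2) (R := R)).range

namespace Stmt4

open scoped commutatorElement

variable {ℓ : ℕ} [Fact ℓ.Prime]

local notation "Mat" => Matrix (Fin 2) (Fin 2) ℤ_[ℓ]
local notation "π" => ((ℓ : ℤ_[ℓ]))
local notation "F" => ZMod ℓ
local notation "SL" => Matrix.SpecialLinearGroup (Fin 2) (ZMod ℓ)

noncomputable def E12 : Matrix (Fin 2) (Fin 2) ℤ_[ℓ] := !![0,1;0,0]
noncomputable def E21 : Matrix (Fin 2) (Fin 2) ℤ_[ℓ] := !![0,0;1,0]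
noncomputable def N3  : Matrix (Fin 2) (Fin 2) ℤ_[ℓ] := !![1,1;-1,-1]
noncomputable def HH  : Matrix (Fin 2) (Fin 2) ℤ_[ℓ] := !![1,0;0,-1]
noncomputable def E22 : Matrix (Fin 2) (Fin 2) ℤ_[ℓ] := !![0,0;0,1]

lemma E12_sq : (E12 (ℓ := ℓ)) * E12 = 0 := by
  ext i j; fin_cases i <;> fin_cases j <;> simp [E12, Matrix.mul_fin_two]

lemma E21_sq : (E21 (ℓ := ℓ)) * E21 = 0 := by
  ext i j; fin_cases i <;> fin_cases j <;> simp [E21, Matrix.mul_fin_two]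

lemma N3_sq : (N3 (ℓ := ℓ)) * N3 = 0 := by
  ext i j; fin_cases i <;> fin_cases j <;> simp [N3, Matrix.mul_fin_two]

lemma det_one_add_smul_E12 (t : ℤ_[ℓ]) : ((1 : Mat) + t • E12).det = 1 := by
  simp [Matrix.det_fin_two, E12, Matrix.one_apply]

lemma det_one_add_smul_E21 (t : ℤ_[ℓ]) : ((1 : Mat) + t • E21).det = 1 := by
  simp [Matrix.det_fin_two, E21, Matrix.one_apply]

lemma det_one_add_smul_N3 (t : ℤ_[ℓ]) : ((1 : Mat) + t • N3).det = 1 := by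
  simp [Matrix.det_fin_two, N3, Matrix.one_apply]; ring

lemma smul_one_mul_smul_one (a b : ℤ_[ℓ]) (X : Mat) :
    (a • X) * (b • (1 : Mat)) = (a * b) • X := by
  rw [smul_mul_smul_comm, mul_one]

lemma natCast_eq_smul_one (k : ℕ) : ((k : Mat)) = ((k : ℤ_[ℓ]) • (1 : Mat)) := by
  rw [← Algebra.algebraMap_eq_smul_one, map_natCast]

lemma pow_ell (hℓ : 5 ≤ ℓ) (M D : Mat) (m : ℕ) (h2 : M * M = π ^ (m + 1) • D) :
    ∃ E : Mat, (1 + M) ^ ℓ = 1 + (ℓ : ℤ_[ℓ]) • M + π ^ (m + 2) • E := by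
  have hp : ℓ.Prime := Fact.out
  set f : ℕ → Mat := fun i => M ^ i * ((ℓ.choose i : ℕ) : Mat) with hf
  have hbin : (1 + M) ^ ℓ = ∑ i ∈ Finset.range (ℓ + 1), f i := by
    rw [add_comm]
    simpa [hf] using (Commute.one_right M).add_pow ℓ
  have hM2k : ∀ j : ℕ, M ^ (j + 2) = π ^ (m + 1) • (M ^ j * D) := by
    intro j
    rw [pow_add, pow_two, h2, mul_smul_comm]
  have key : ∀ i : ℕ, i < ℓ - 1 → ∃ E : Mat, f (i + 2) = π ^ (m + 2) • E := by
    intro i hi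
    rcases lt_or_eq_of_le (by omega : i + 2 ≤ ℓ) with hlt | heq
    · obtain ⟨k, hk⟩ := hp.dvd_choose_self (by omega : i + 2 ≠ 0) hlt
      refine ⟨(k : ℤ_[ℓ]) • (M ^ i * D), ?_⟩
      simp only [hf]
      simp only [hM2k i, hk, Nat.cast_mul, natCast_eq_smul_one]
      rw [smul_one_mul_smul_one ((ℓ : ℤ_[ℓ])) ((k : ℤ_[ℓ])) 1,
        smul_one_mul_smul_one, smul_smul]
      congr 1
      ring
    · refine ⟨(π ^ m) • ((M ^ (ℓ - 4) * D) * D), ?_⟩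
      simp only [hf]
      rw [heq, Nat.choose_self, Nat.cast_one, mul_one]
      have h4 : M ^ ℓ = M ^ ((ℓ - 4) + 2 + 2) := by congr 1; omega
      rw [h4, hM2k, hM2k, smul_mul_assoc, smul_smul, smul_smul]
      congr 1
      ring
  set g : ℕ → Mat := fun i => if h : i < ℓ - 1 then (key i h).choose else 0 with hg
  have hsum : ∑ i ∈ Finset.range (ℓ - 1), f (i + 2)
      = π ^ (m + 2) • ∑ i ∈ Finset.range (ℓ - 1), g i := by
    rw [Finset.smul_sum]
    refine Finset.sum_congr rfl fun i hi => ?_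
    have hi' := Finset.mem_range.mp hi
    rw [hg]; simp only [dif_pos hi']
    exact (key i hi').choose_spec
  have h5 : ∀ (f : ℕ → Mat) (n : ℕ),
      ∑ i ∈ Finset.range (n + 2), f i = f 0 + f 1 + ∑ i ∈ Finset.range n, f (i + 2) := by
    intro f n
    rw [Finset.sum_range_succ' f (n + 1), Finset.sum_range_succ' (fun i => f (i + 1)) n]
    abel
  rw [show ℓ + 1 = (ℓ - 1) + 2 by omega] at hbin
  rw [h5 f (ℓ - 1)] at hbin
  have hf0 : f 0 = 1 := by simp [hf]
  have hf1 : f 1 = (ℓ : ℤ_[ℓ]) • M := by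
    rw [hf]; simp only [pow_one, Nat.choose_one_right]
    rw [natCast_eq_smul_one, mul_smul_comm, mul_one]
  exact ⟨∑ i ∈ Finset.range (ℓ - 1), g i, by rw [hbin, hf0, hf1, hsum]⟩

lemma pow_tower (hℓ : 5 ≤ ℓ) (N B : Mat) (hN : N * N = 0) (t : ℤ_[ℓ]) (n : ℕ) :
    ∃ B' : Mat, ((1 : Mat) + t • N + π • B) ^ (ℓ ^ n)
      = 1 + (π ^ n * t) • N + π ^ (n + 1) • B' := by
  induction n with
  | zero => exact ⟨B, by simp⟩
  | succ n ih =>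
    obtain ⟨B', hB'⟩ := ih
    set M : Mat := (π ^ n * t) • N + π ^ (n + 1) • B' with hM
    have hM2 : M * M = π ^ (n + 1) •
        ((π ^ n * t) • (N * B' + B' * N) + π ^ (n + 1) • (B' * B')) := by
      rw [hM]
      simp only [add_mul, mul_add, smul_mul_assoc, mul_smul_comm, smul_smul, hN,
        smul_zero, smul_add]
      module
    obtain ⟨E, hE⟩ := pow_ell hℓ M _ n hM2
    refine ⟨B' + E, ?_⟩
    rw [pow_succ, pow_mul, hB', add_assoc, ← hM, hE]
    rw [hM]
    simp only [smul_add, smul_smul]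
    module

variable (G : Subgroup (GL (Fin 2) ℤ_[ℓ]))

def PD (s : Matrix.SpecialLinearGroup (Fin 2) (ZMod ℓ)) : Prop :=
  ∃ g : GL (Fin 2) ℤ_[ℓ], g ∈ G ∧ ((g : Mat)).det = 1 ∧
    glMap (PadicInt.toZMod (p := ℓ)) g = Matrix.SpecialLinearGroup.toGL s

lemma PD_mul {s t : SL} (hs : PD G s) (ht : PD G t) : PD G (s * t) := by
  obtain ⟨gs, hgs, hds, hrs⟩ := hs
  obtain ⟨gt, hgt, hdt, hrt⟩ := ht
  refine ⟨gs * gt, G.mul_mem hgs hgt, ?_, ?_⟩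
  · rw [Units.val_mul, Matrix.det_mul, hds, hdt, one_mul]
  · rw [MonoidHom.map_mul, hrs, hrt, MonoidHom.map_mul]

variable (hℓ : 5 ≤ ℓ)
  (hSL : SL2subgroup (ZMod ℓ) ≤ Subgroup.map (glMap (PadicInt.toZMod (p := ℓ))) G)
include hSL

lemma PD_comm (p q : SL) : PD G ⁅p, q⁆ := by
  obtain ⟨gp, hgp, hrp⟩ := hSL (⟨p, rfl⟩ : Matrix.SpecialLinearGroup.toGL p ∈ SL2subgroup F)
  obtain ⟨gq, hgq, hrq⟩ := hSL (⟨q, rfl⟩ : Matrix.SpecialLinearGroup.toGL q ∈ SL2subgroup F)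
  refine ⟨⁅gp, gq⁆, ?_, ?_, ?_⟩
  · rw [commutatorElement_def]
    exact G.mul_mem (G.mul_mem (G.mul_mem hgp hgq) (G.inv_mem hgp)) (G.inv_mem hgq)
  · have h1 : Matrix.GeneralLinearGroup.det ⁅gp, gq⁆ = 1 := by
      rw [map_commutatorElement]
      exact commutatorElement_eq_one_iff_commute.mpr (mul_comm _ _)
    rw [← Matrix.GeneralLinearGroup.val_det_apply, h1, Units.val_one]
  · rw [map_commutatorElement, hrp, hrq, ← map_commutatorElement]

omit hSL

lemma two_ne (hℓ : 5 ≤ ℓ) : (2 : ZMod ℓ) ≠ 0 := by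
  have : ((2 : ℕ) : ZMod ℓ) ≠ 0 := by
    rw [Ne, ZMod.natCast_eq_zero_iff]
    intro h; have := Nat.le_of_dvd (by norm_num) h; omega
  simpa using this

lemma three_ne (hℓ : 5 ≤ ℓ) : (3 : ZMod ℓ) ≠ 0 := by
  have : ((3 : ℕ) : ZMod ℓ) ≠ 0 := by
    rw [Ne, ZMod.natCast_eq_zero_iff]
    intro h; have := Nat.le_of_dvd (by norm_num) h; omega
  simpa using this

def sl_e12 (t : F) : Matrix.SpecialLinearGroup (Fin 2) (ZMod ℓ) :=
  ⟨!![1,t;0,1], by simp [Matrix.det_fin_two_of]⟩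
def sl_e21 (t : F) : Matrix.SpecialLinearGroup (Fin 2) (ZMod ℓ) :=
  ⟨!![1,0;t,1], by simp [Matrix.det_fin_two_of]⟩
variable (hl5 : 5 ≤ ℓ)

def dd : Matrix.SpecialLinearGroup (Fin 2) (ZMod ℓ) :=
  ⟨!![2,0;0,(2:F)⁻¹], by
    simp [Matrix.det_fin_two_of, mul_inv_cancel₀ (two_ne (ℓ := ℓ) hl5)]⟩
def dd' : Matrix.SpecialLinearGroup (Fin 2) (ZMod ℓ) :=
  ⟨!![(2:F)⁻¹,0;0,2], by
    simp [Matrix.det_fin_two_of, inv_mul_cancel₀ (two_ne (ℓ := ℓ) hl5)]⟩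

lemma comm_dd_e12 (hℓ : 5 ≤ ℓ) (s : F) : ⁅dd hℓ, sl_e12 s⁆ = sl_e12 (3 * s) := by
  apply Subtype.ext
  simp only [commutatorElement_def, Matrix.SpecialLinearGroup.coe_mul,
    Matrix.SpecialLinearGroup.coe_inv]
  simp only [dd, sl_e12, Matrix.adjugate_fin_two,
    Matrix.mul_fin_two]
  have h2 : (2 : F) ≠ 0 := two_ne hℓ
  ext i j
  fin_cases i <;> fin_cases j <;> simp <;> field_simp <;> ring

lemma comm_dd'_e21 (hℓ : 5 ≤ ℓ) (s : F) : ⁅dd' hℓ, sl_e21 s⁆ = sl_e21 (3 * s) := by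
  apply Subtype.ext
  simp only [commutatorElement_def, Matrix.SpecialLinearGroup.coe_mul,
    Matrix.SpecialLinearGroup.coe_inv]
  simp only [dd', sl_e21, Matrix.adjugate_fin_two,
    Matrix.mul_fin_two]
  have h2 : (2 : F) ≠ 0 := two_ne hℓ
  ext i j
  fin_cases i <;> fin_cases j <;> simp <;> field_simp <;> ring


variable (hℓ : 5 ≤ ℓ)
  (hSL : SL2subgroup (ZMod ℓ) ≤ Subgroup.map (glMap (PadicInt.toZMod (p := ℓ))) G)
include hℓ hSL

lemma PD_e12 (t : F) : PD G (sl_e12 t) := by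
  have h3 : (3 : F) ≠ 0 := three_ne hℓ
  have := PD_comm G hSL (dd hℓ) (sl_e12 (t * 3⁻¹))
  rw [comm_dd_e12 hℓ] at this
  have ht : 3 * (t * 3⁻¹) = t := by field_simp
  rwa [ht] at this

lemma PD_e21 (t : F) : PD G (sl_e21 t) := by
  have h3 : (3 : F) ≠ 0 := three_ne hℓ
  have := PD_comm G hSL (dd' hℓ) (sl_e21 (t * 3⁻¹))
  rw [comm_dd'_e21 hℓ] at this
  have ht : 3 * (t * 3⁻¹) = t := by field_simp
  rwa [ht] at this

omit hℓ hSL in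
lemma decomp (a b c d : F) (hdet : a * d - b * c = 1) (hc : c ≠ 0) :
    !![a,b;c,d] = !![1,(a-1)*c⁻¹;0,1] * !![1,0;c,1] * !![1,(d-1)*c⁻¹;0,1] := by
  have hcc : c * c⁻¹ = 1 := mul_inv_cancel₀ hc
  rw [Matrix.mul_fin_two, Matrix.mul_fin_two]
  ext i j
  fin_cases i <;> fin_cases j <;> simp <;> field_simp
  · linear_combination
  · linear_combination -hdet
  · linear_combination

lemma PD_cne (s : SL) (hc : (s : Matrix (Fin 2) (Fin 2) F) 1 0 ≠ 0) : PD G s := by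
  have hdet : (s : Matrix (Fin 2) (Fin 2) F) 0 0 * (s : Matrix (Fin 2) (Fin 2) F) 1 1
      - (s : Matrix (Fin 2) (Fin 2) F) 0 1 * (s : Matrix (Fin 2) (Fin 2) F) 1 0 = 1 := by
    have := s.2
    rw [Matrix.det_fin_two] at this
    exact this
  have hs : s = sl_e12 (((s : Matrix (Fin 2) (Fin 2) F) 0 0 - 1) * ((s : Matrix (Fin 2) (Fin 2) F) 1 0)⁻¹)
      * sl_e21 ((s : Matrix (Fin 2) (Fin 2) F) 1 0)
      * sl_e12 (((s : Matrix (Fin 2) (Fin 2) F) 1 1 - 1) * ((s : Matrix (Fin 2) (Fin 2) F) 1 0)⁻¹) := by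
    apply Subtype.ext
    simp only [Matrix.SpecialLinearGroup.coe_mul, sl_e12, sl_e21]
    rw [Matrix.eta_fin_two (s : Matrix (Fin 2) (Fin 2) F)]
    exact decomp _ _ _ _ hdet hc
  rw [hs]
  exact PD_mul G (PD_mul G (PD_e12 G hℓ hSL _) (PD_e21 G hℓ hSL _)) (PD_e12 G hℓ hSL _)

omit hℓ hSL in
lemma sl_e21_mul (u v : F) : sl_e21 (ℓ := ℓ) u * sl_e21 v = sl_e21 (u + v) := by
  apply Subtype.ext
  rw [Matrix.SpecialLinearGroup.coe_mul]
  simp only [sl_e21, Matrix.mul_fin_two]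
  ext i j
  fin_cases i <;> fin_cases j <;> simp <;> ring

omit hℓ hSL in
lemma sl_e21_zero : sl_e21 (ℓ := ℓ) 0 = 1 := by
  apply Subtype.ext
  show !![(1:F),0;0,1] = _
  rw [Matrix.SpecialLinearGroup.coe_one, Matrix.one_fin_two]

lemma PD_all (s : SL) : PD G s := by
  by_cases hc : (s : Matrix (Fin 2) (Fin 2) F) 1 0 ≠ 0
  · exact PD_cne G hℓ hSL s hc
  · push_neg at hc
    have hdet : (s : Matrix (Fin 2) (Fin 2) F) 0 0 * (s : Matrix (Fin 2) (Fin 2) F) 1 1 = 1 := by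
      have := s.2
      rw [Matrix.det_fin_two] at this
      rw [hc] at this
      simpa using this
    have hme : ((s * sl_e21 1 : SL) : Matrix (Fin 2) (Fin 2) F) 1 0
        = (s : Matrix (Fin 2) (Fin 2) F) 1 0 * 1 + (s : Matrix (Fin 2) (Fin 2) F) 1 1 * 1 := by
      rw [Matrix.SpecialLinearGroup.coe_mul]
      simp only [sl_e21]
      conv_lhs => rw [Matrix.eta_fin_two (s : Matrix (Fin 2) (Fin 2) F), Matrix.mul_fin_two]
      simp
    have hc' : ((s * sl_e21 1 : SL) : Matrix (Fin 2) (Fin 2) F) 1 0 ≠ 0 := by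
      rw [hme, hc]
      intro h
      simp only [zero_mul, zero_add, mul_one] at h
      rw [h, mul_zero] at hdet
      exact zero_ne_one hdet
    have := PD_mul G (PD_cne G hℓ hSL _ hc') (PD_e21 G hℓ hSL (-1))
    rwa [mul_assoc, sl_e21_mul, add_neg_cancel, sl_e21_zero, mul_one] at this


def good (x : Mat) : Prop :=
  x.det = 1 ∧ ∃ g : GL (Fin 2) ℤ_[ℓ], g ∈ G ∧ (g : Mat) = x

lemma claim_one (x : Mat) (hx : x.det = 1) :
    ∃ y : Mat, good G y ∧ ∃ C : Mat, y = x + π • C := by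
  have hdet : (x.map (PadicInt.toZMod (p := ℓ))).det = 1 := by
    rw [← RingHom.mapMatrix_apply, ← RingHom.map_det, hx, map_one]
  obtain ⟨g, hgG, hgd, hgr⟩ := PD_all G hℓ hSL ⟨x.map (PadicInt.toZMod (p := ℓ)), hdet⟩
  have hval : (g : Mat).map (PadicInt.toZMod (p := ℓ)) = x.map (PadicInt.toZMod (p := ℓ)) := by
    have := congrArg Units.val hgr
    simpa [Matrix.GeneralLinearGroup.map, RingHom.mapMatrix_apply,
      Matrix.SpecialLinearGroup.toGL] using this
  have hdvd : ∀ i j, ∃ c : ℤ_[ℓ], (g : Mat) i j - x i j = π * c := by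
    intro i j
    have h0 : (PadicInt.toZMod (p := ℓ)) ((g : Mat) i j - x i j) = 0 := by
      rw [map_sub]
      have := congrFun (congrFun hval i) j
      simp only [Matrix.map_apply] at this
      rw [this, sub_self]
    have h1 : ((g : Mat) i j - x i j) ∈ RingHom.ker (PadicInt.toZMod (p := ℓ)) := h0
    rw [PadicInt.ker_toZMod, PadicInt.maximalIdeal_eq_span_p, Ideal.mem_span_singleton] at h1
    exact h1
  refine ⟨(g : Mat), ⟨hgd, g, hgG, rfl⟩, Matrix.of (fun i j => (hdvd i j).choose), ?_⟩
  ext i j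
  have := (hdvd i j).choose_spec
  simp only [Matrix.add_apply, Matrix.smul_apply, Matrix.of_apply, smul_eq_mul]
  linear_combination this



omit hℓ hSL in
lemma good_mul {x y : Mat} (hx : good G x) (hy : good G y) : good G (x * y) := by
  obtain ⟨hdx, gx, hgx, hvx⟩ := hx
  obtain ⟨hdy, gy, hgy, hvy⟩ := hy
  exact ⟨by rw [Matrix.det_mul, hdx, hdy, one_mul],
    gx * gy, G.mul_mem hgx hgy, by rw [Units.val_mul, hvx, hvy]⟩

omit hℓ hSL in
lemma good_pow {x : Mat} (hx : good G x) (k : ℕ) : good G (x ^ k) := by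
  obtain ⟨hdx, gx, hgx, hvx⟩ := hx
  exact ⟨by rw [Matrix.det_pow, hdx, one_pow],
    gx ^ k, G.pow_mem hgx k, by rw [Units.val_pow_eq_pow_val, hvx]⟩

lemma gen_pow (N : Mat) (hN : N * N = 0) (hdet1 : ∀ t : ℤ_[ℓ], ((1 : Mat) + t • N).det = 1)
    (t : ℤ_[ℓ]) (k : ℕ) :
    ∃ y : Mat, good G y ∧ ∃ B : Mat,
      y = 1 + (π ^ (k + 1) * t) • N + π ^ (k + 2) • B := by
  obtain ⟨y0, hy0, C, hC⟩ := claim_one G hℓ hSL (1 + t • N) (hdet1 t)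
  obtain ⟨B', hB'⟩ := pow_tower hℓ N C hN t (k + 1)
  refine ⟨y0 ^ (ℓ ^ (k + 1)), good_pow G hy0 _, B', ?_⟩
  rw [hC, add_assoc] at *
  rw [hB']

omit hℓ hSL in
lemma mul_cong (k : ℕ) (X Y U V : Mat) :
    (1 + π ^ (k + 1) • X + π ^ (k + 2) • U) * (1 + π ^ (k + 1) • Y + π ^ (k + 2) • V)
      = 1 + π ^ (k + 1) • (X + Y) + π ^ (k + 2) •
        (U + V + π ^ k • (X * Y) + π ^ (k + 1) • (X * V + U * Y) + π ^ (k + 2) • (U * V)) := by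
  simp only [add_mul, mul_add, smul_mul_assoc, mul_smul_comm, smul_smul, smul_add, one_mul,
    mul_one]
  module

omit hℓ hSL in
lemma gens_identity (a b c : ℤ_[ℓ]) :
    a • N3 + (b - a) • E12 + (c + a) • E21
      = (a • HH + b • E12 + c • E21 : Mat) := by
  ext i j
  fin_cases i <;> fin_cases j <;> simp [N3, E12, E21, HH] <;> ring

lemma kernel_step (k : ℕ) (a b c : ℤ_[ℓ]) :
    ∃ y : Mat, good G y ∧ ∃ B : Mat,
      y = 1 + π ^ (k + 1) • (a • HH + b • E12 + c • E21) + π ^ (k + 2) • B := by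
  obtain ⟨y1, hy1, B1, hB1⟩ := gen_pow G hℓ hSL N3 N3_sq det_one_add_smul_N3 a k
  obtain ⟨y2, hy2, B2, hB2⟩ := gen_pow G hℓ hSL E12 E12_sq det_one_add_smul_E12 (b - a) k
  obtain ⟨y3, hy3, B3, hB3⟩ := gen_pow G hℓ hSL E21 E21_sq det_one_add_smul_E21 (c + a) k
  refine ⟨y1 * y2 * y3, good_mul G (good_mul G hy1 hy2) hy3, ?_⟩
  rw [hB1, hB2, hB3]
  simp only [← smul_smul (π ^ (k + 1))]
  rw [mul_cong, mul_cong]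
  rw [← gens_identity a b c]
  exact ⟨_, rfl⟩

omit hℓ hSL in
lemma pi_ne_zero : (π : ℤ_[ℓ]) ≠ 0 := by
  have hp : ℓ.Prime := Fact.out
  exact_mod_cast Nat.cast_ne_zero.mpr hp.ne_zero

omit hℓ hSL in
lemma matrix_decomp (A : Mat) :
    A = (A 0 0) • HH + (A 0 1) • E12 + (A 1 0) • E21 + (A 0 0 + A 1 1) • E22 := by
  ext i j
  fin_cases i <;> fin_cases j <;> simp [N3, E12, E21, HH, E22] <;> ring

theorem claim_all (n : ℕ) (x : Mat) (hx : x.det = 1) :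
    ∃ y : Mat, good G y ∧ ∃ C : Mat, y = x + π ^ (n + 1) • C := by
  induction n generalizing x with
  | zero =>
    obtain ⟨y, hy, C, hC⟩ := claim_one G hℓ hSL x hx
    exact ⟨y, hy, C, by rw [hC, pow_one]⟩
  | succ n ih =>
    obtain ⟨y, hy, C, hC⟩ := ih x hx
    have hydet : y.det = 1 := hy.1
    obtain ⟨A, hA⟩ : ∃ A : Mat, A = x.adjugate * C := ⟨_, rfl⟩
    have hyx : y = x * (1 + π ^ (n + 1) • A) := by
      rw [mul_add, mul_one, hA, mul_smul_comm, ← mul_assoc, Matrix.mul_adjugate, hx, one_smul,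
        one_mul, hC]
    have hdet1A : ((1 : Mat) + π ^ (n + 1) • A).det = 1 := by
      have := hydet
      rw [hyx, Matrix.det_mul, hx, one_mul] at this
      exact this
    have hdet' : (1 + π ^ (n + 1) * A 0 0) * (1 + π ^ (n + 1) * A 1 1)
        - (π ^ (n + 1) * A 0 1) * (π ^ (n + 1) * A 1 0) = 1 := by
      rw [Matrix.det_fin_two] at hdet1A
      simpa [Matrix.add_apply, Matrix.smul_apply, Matrix.one_apply, smul_eq_mul] using hdet1A
    have htr : A 0 0 + A 1 1 = π ^ (n + 1) * (A 0 1 * A 1 0 - A 0 0 * A 1 1) := by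
      apply mul_left_cancel₀ (pow_ne_zero (n + 1) (pi_ne_zero (ℓ := ℓ)))
      linear_combination hdet'
    have hform : (1 : Mat) + π ^ (n + 1) • A
        = 1 + π ^ (n + 1) • ((A 0 0) • HH + (A 0 1) • E12 + (A 1 0) • E21)
          + π ^ (n + 2) • ((π ^ n * (A 0 1 * A 1 0 - A 0 0 * A 1 1)) • E22) := by
      conv_lhs => rw [matrix_decomp A, htr]
      simp only [smul_add, smul_smul]
      module
    obtain ⟨h, hgood, B, hB⟩ := kernel_step G hℓ hSL n (-(A 0 0)) (-(A 0 1)) (-(A 1 0))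
    refine ⟨y * h, good_mul G hy hgood, ?_⟩
    have hneg : (-(A 0 0)) • HH + (-(A 0 1)) • E12 + (-(A 1 0)) • E21
        = -(((A 0 0) • HH + (A 0 1) • E12 + (A 1 0) • E21 : Mat)) := by
      simp only [neg_smul]; abel
    rw [hyx, hform, hB, hneg, mul_assoc]
    rw [mul_cong n _ _ _ _]
    rw [add_neg_cancel, smul_zero, add_zero]
    exact ⟨_, by rw [mul_add, mul_one, mul_smul_comm]⟩

omit hℓ hSL in
lemma adj_cong (X C : Mat) (s : ℤ_[ℓ]) :
    (X + s • C).adjugate = X.adjugate + s • C.adjugate := by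
  rw [Matrix.adjugate_fin_two (X + s • C), Matrix.adjugate_fin_two X, Matrix.adjugate_fin_two C]
  ext i j
  fin_cases i <;> fin_cases j <;>
    simp [Matrix.add_apply, Matrix.smul_apply, smul_eq_mul] <;> ring

omit hℓ hSL in
lemma inv_val_adj (g : GL (Fin 2) ℤ_[ℓ]) (h : ((g : Mat)).det = 1) :
    ((g⁻¹ : GL (Fin 2) ℤ_[ℓ]) : Mat) = (g : Mat).adjugate := by
  have h1 : (g : Mat) * (g : Mat).adjugate = 1 := by
    rw [Matrix.mul_adjugate, h, one_smul]
  calc ((g⁻¹ : GL (Fin 2) ℤ_[ℓ]) : Mat)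
      = ((g⁻¹ : GL (Fin 2) ℤ_[ℓ]) : Mat) * ((g : Mat) * (g : Mat).adjugate) := by
        rw [h1, mul_one]
    _ = (((g⁻¹ * g : GL (Fin 2) ℤ_[ℓ])) : Mat) * (g : Mat).adjugate := by
        rw [Units.val_mul, mul_assoc]
    _ = (g : Mat).adjugate := by rw [inv_mul_cancel g, Units.val_one, one_mul]

omit hℓ hSL in
lemma tendsto_entries (f : ℕ → Mat) (m : Mat)
    (hc : ∀ n : ℕ, ∃ C : Mat, f n = m + (π ^ (n + 1) : ℤ_[ℓ]) • C) :
    Filter.Tendsto f Filter.atTop (nhds m) := by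
  have hl1 : (1 : ℝ) < (ℓ : ℝ) := by
    have hp : ℓ.Prime := Fact.out
    exact_mod_cast hp.one_lt
  refine tendsto_pi_nhds.mpr ?_
  intro i
  rw [tendsto_pi_nhds]
  intro j
  rw [tendsto_iff_dist_tendsto_zero]
  apply squeeze_zero (fun n => dist_nonneg) (g := fun n => ((ℓ : ℝ)⁻¹) ^ n)
  · intro n
    obtain ⟨C, hCn⟩ := hc n
    have hdiff : f n i j - m i j = π ^ (n + 1) * C i j := by
      rw [hCn]
      simp [Matrix.add_apply, Matrix.smul_apply, smul_eq_mul]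
    rw [dist_eq_norm, hdiff]
    calc ‖(π ^ (n + 1) : ℤ_[ℓ]) * C i j‖
        ≤ ‖(π ^ (n + 1) : ℤ_[ℓ])‖ * ‖C i j‖ := norm_mul_le _ _
      _ ≤ ‖(π ^ (n + 1) : ℤ_[ℓ])‖ * 1 := by
          exact mul_le_mul_of_nonneg_left (PadicInt.norm_le_one _) (norm_nonneg _)
      _ = (ℓ : ℝ) ^ (-((n + 1 : ℕ) : ℤ)) := by rw [mul_one, PadicInt.norm_p_pow]
      _ = ((ℓ : ℝ)⁻¹) ^ (n + 1) := by
          rw [zpow_neg, zpow_natCast, inv_pow]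
      _ ≤ ((ℓ : ℝ)⁻¹) ^ n := by
          rw [pow_succ]
          have h0 : (0 : ℝ) ≤ ((ℓ : ℝ)⁻¹) ^ n := by positivity
          have h1 : (ℓ : ℝ)⁻¹ ≤ 1 := by
            rw [inv_le_one_iff₀]; right; linarith
          calc ((ℓ : ℝ)⁻¹) ^ n * (ℓ : ℝ)⁻¹ ≤ ((ℓ : ℝ)⁻¹) ^ n * 1 :=
                mul_le_mul_of_nonneg_left h1 h0
            _ = ((ℓ : ℝ)⁻¹) ^ n := mul_one _
  · apply tendsto_pow_atTop_nhds_zero_of_lt_one (by positivity)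
    rw [inv_lt_one_iff₀]; right; linarith

end Stmt4

theorem statement4 (ℓ : ℕ) [Fact ℓ.Prime] (hℓ : 5 ≤ ℓ) (G : Subgroup (GL (Fin 2) ℤ_[ℓ]))
    (hGclosed : IsClosed (G : Set (GL (Fin 2) ℤ_[ℓ])))
    (hSL : SL2subgroup (ZMod ℓ) ≤ Subgroup.map (glMap (PadicInt.toZMod (p := ℓ))) G) :
    SL2subgroup ℤ_[ℓ] ≤ G := by
  intro u hu
  obtain ⟨v, hv⟩ := hu
  have hm : ((v : Matrix (Fin 2) (Fin 2) ℤ_[ℓ])).det = 1 := v.2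
  have hval : (u : Matrix (Fin 2) (Fin 2) ℤ_[ℓ]) = (v : Matrix (Fin 2) (Fin 2) ℤ_[ℓ]) := by
    rw [← hv]; rfl
  have H : ∀ n : ℕ, ∃ g : GL (Fin 2) ℤ_[ℓ], g ∈ G ∧
      ((g : Matrix (Fin 2) (Fin 2) ℤ_[ℓ])).det = 1 ∧
      ∃ C : Matrix (Fin 2) (Fin 2) ℤ_[ℓ],
        (g : Matrix (Fin 2) (Fin 2) ℤ_[ℓ])
          = (v : Matrix (Fin 2) (Fin 2) ℤ_[ℓ]) + ((ℓ : ℤ_[ℓ]) ^ (n + 1)) • C := by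
    intro n
    obtain ⟨y, ⟨hydet, g, hgG, hgval⟩, C, hC⟩ := Stmt4.claim_all G hℓ hSL n _ hm
    exact ⟨g, hgG, by rw [hgval]; exact hydet, C, by rw [hgval, hC]⟩
  choose g hmem hdet hC using H
  have hvaltendsto : Filter.Tendsto (fun n => ((g n : GL (Fin 2) ℤ_[ℓ]) :
      Matrix (Fin 2) (Fin 2) ℤ_[ℓ])) Filter.atTop
      (nhds ((u : Matrix (Fin 2) (Fin 2) ℤ_[ℓ]))) := by
    rw [hval]
    exact Stmt4.tendsto_entries _ _ hC
  have hinvtendsto : Filter.Tendsto (fun n => (((g n)⁻¹ : GL (Fin 2) ℤ_[ℓ]) :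
      Matrix (Fin 2) (Fin 2) ℤ_[ℓ])) Filter.atTop
      (nhds (((u⁻¹ : GL (Fin 2) ℤ_[ℓ]) : Matrix (Fin 2) (Fin 2) ℤ_[ℓ]))) := by
    have hu' : ((u⁻¹ : GL (Fin 2) ℤ_[ℓ]) : Matrix (Fin 2) (Fin 2) ℤ_[ℓ])
        = (v : Matrix (Fin 2) (Fin 2) ℤ_[ℓ]).adjugate := by
      rw [Stmt4.inv_val_adj u (by rw [hval]; exact hm), hval]
    rw [hu']
    apply Stmt4.tendsto_entries
    intro n
    refine ⟨((hC n).choose).adjugate, ?_⟩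
    rw [Stmt4.inv_val_adj (g n) (hdet n)]
    conv_lhs => rw [(hC n).choose_spec]
    rw [Stmt4.adj_cong]
  have htend : Filter.Tendsto g Filter.atTop (nhds u) := by
    rw [Units.isInducing_embedProduct.tendsto_nhds_iff]
    have hemb : ∀ w : GL (Fin 2) ℤ_[ℓ], Units.embedProduct _ w
        = ((w : Matrix (Fin 2) (Fin 2) ℤ_[ℓ]),
           MulOpposite.op ((w⁻¹ : GL (Fin 2) ℤ_[ℓ]) : Matrix (Fin 2) (Fin 2) ℤ_[ℓ])) :=
      fun w => rfl
    simp only [Function.comp_def, hemb]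
    exact Filter.Tendsto.prodMk_nhds hvaltendsto
      ((MulOpposite.continuous_op.tendsto _).comp hinvtendsto)
  exact hGclosed.mem_of_tendsto htend (Filter.Eventually.of_forall hmem)
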